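/- If x_i - x_k = c(x_i - x_j) for some scalar c > 1, and b_{ik} = c*b_{ij}, then the Laguerre cell C_j(z) is contained in the hyperplane {y : <x_i - x_j, y> = b_{ij}}, hence has Lebesgue measure zero. -/

import Mathlib

open RealInnerProductSpace MeasureTheory

/-- offsets b_{ij}(z) -/
noncomputable def bOff {d N : ℕ} (x : Fin N → EuclideanSpace ℝ (Fin d))
    (z : Fin N → ℝ) (i j : Fin N) : ℝ :=
  (‖x i‖ ^ 2 - ‖x j‖ ^ 2) / 2 - z i + z j

/-- Laguerre cell C_i(z) -/
noncomputable def Lcell {d N : ℕ} (x : Fin N → EuclideanSpace ℝ (Fin d))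
    (z : Fin N → ℝ) (i : Fin N) : Set (EuclideanSpace ℝ (Fin d)) :=
  {y | ∀ j, j ≠ i → bOff x z i j ≤ ⟪x i - x j, y⟫}

/-- if x_i - x_k = c (x_i - x_j) with c > 1 and b_{ik} = c b_{ij}, then
C_j(z) lies in the hyperplane {y : ⟪x_i - x_j, y⟫ = b_{ij}} and has Lebesgue measure zero. -/
theorem laguerre_cell_degenerate_of_gt_one (d N : ℕ) (hN : 3 ≤ N)
    (x : Fin N → EuclideanSpace ℝ (Fin d)) (hx : Function.Injective x)
    (z : Fin N → ℝ) (i j k : Fin N) (hij : i ≠ j) (hik : i ≠ k) (hjk : j ≠ k)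
    (c : ℝ) (hc : 1 < c) (hxk : x i - x k = c • (x i - x j))
    (hbk : bOff x z i k = c * bOff x z i j) :
    Lcell x z j ⊆ {y | ⟪x i - x j, y⟫ = bOff x z i j} ∧ volume (Lcell x z j) = 0 := by
  have hsub : Lcell x z j ⊆ {y | ⟪x i - x j, y⟫ = bOff x z i j} := by
    intro y hy
    have h1 : bOff x z j i ≤ ⟪x j - x i, y⟫ := hy i hij
    have h2 : bOff x z j k ≤ ⟪x j - x k, y⟫ := hy k hjk.symm
    have hxi : x j - x k = (c - 1) • (x i - x j) := by
      have : x j - x k = (x i - x k) - (x i - x j) := by abel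
      rw [this, hxk, sub_smul, one_smul]
    have hji : bOff x z j i = -bOff x z i j := by simp [bOff]; ring
    have hbjk : bOff x z j k = (c - 1) * bOff x z i j := by
      have : bOff x z j k = bOff x z j i + bOff x z i k := by simp [bOff]; ring
      rw [this, hji, hbk]; ring
    have hji' : (x j - x i : EuclideanSpace ℝ (Fin d)) = -(x i - x j) := by abel
    rw [hji', inner_neg_left, hji, neg_le_neg_iff] at h1
    rw [hxi, real_inner_smul_left, hbjk] at h2
    have h2' : bOff x z i j ≤ ⟪x i - x j, y⟫ :=
      (mul_le_mul_iff_right₀ (by linarith : (0:ℝ) < c - 1)).mp h2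
    exact le_antisymm h1 h2'
  refine ⟨hsub, ?_⟩
  have hv : (x i - x j : EuclideanSpace ℝ (Fin d)) ≠ 0 :=
    sub_ne_zero.mpr (fun h => hij (hx h))
  set v : EuclideanSpace ℝ (Fin d) := x i - x j
  set b : ℝ := bOff x z i j
  set y0 : EuclideanSpace ℝ (Fin d) := (b / ‖v‖ ^ 2) • v
  have hnv : ‖v‖ ≠ 0 := norm_ne_zero_iff.mpr hv
  have hy0 : ⟪v, y0⟫ = b := by
    rw [real_inner_smul_right, real_inner_self_eq_norm_sq]
    field_simp
  set s : AffineSubspace ℝ (EuclideanSpace ℝ (Fin d)) :=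
    AffineSubspace.mk' y0 (LinearMap.ker (innerSL ℝ v : EuclideanSpace ℝ (Fin d) →ₗ[ℝ] ℝ))
  have hset : {y : EuclideanSpace ℝ (Fin d) | ⟪v, y⟫ = b} = (s : Set _) := by
    ext y
    simp only [Set.mem_setOf_eq, SetLike.mem_coe, s, AffineSubspace.mem_mk',
      LinearMap.mem_ker, ContinuousLinearMap.coe_coe, innerSL_apply_apply, vsub_eq_sub, inner_sub_right, hy0]
    constructor <;> intro h <;> linarith
  have hne : s ≠ ⊤ := by
    intro h
    have : y0 + v ∈ s := by rw [h]; trivial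
    rw [AffineSubspace.mem_mk'] at this
    simp only [vsub_eq_sub, add_sub_cancel_left, LinearMap.mem_ker, ContinuousLinearMap.coe_coe, innerSL_apply_apply] at this
    exact hv (inner_self_eq_zero.mp this)
  have hzero : volume ({y : EuclideanSpace ℝ (Fin d) | ⟪v, y⟫ = b}) = 0 := by
    rw [hset]; exact Measure.addHaar_affineSubspace volume s hne
  exact measure_mono_null hsub hzero
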